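/- Let M₁, M₂ be closed subspaces of a Hilbert space, M = M₁ ∩ M₂, A = M₁ ∩ M^⊥, B = M₂ ∩ M^⊥. Then for every k ∈ ℕ, (P_{M₂}P_{M₁})^k − P_M = (P_B P_A)^k as operators. -/

import Mathlib

open scoped InnerProductSpace

noncomputable def proj {𝕜 H : Type*} [RCLike 𝕜] [NormedAddCommGroup H]
    [InnerProductSpace 𝕜 H] (S : Submodule 𝕜 H) [CompleteSpace S] : H →L[𝕜] H :=
  S.subtypeL.comp S.orthogonalProjectionOnto

section aux

variable {𝕜 H : Type*} [RCLike 𝕜] [NormedAddCommGroup H] [InnerProductSpace 𝕜 H]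
  [CompleteSpace H]

lemma proj_apply (S : Submodule 𝕜 H) [CompleteSpace S] (x : H) :
    proj S x = (S.orthogonalProjectionOnto x : H) := rfl

lemma proj_mem (S : Submodule 𝕜 H) [CompleteSpace S] (x : H) : proj S x ∈ S :=
  (S.orthogonalProjectionOnto x).2

lemma proj_eq_self (S : Submodule 𝕜 H) [CompleteSpace S] {x : H} (hx : x ∈ S) :
    proj S x = x := by
  rw [proj_apply]; exact Submodule.starProjection_eq_self_iff.2 hx

lemma proj_eq_zero (S : Submodule 𝕜 H) [CompleteSpace S] {x : H} (hx : x ∈ Sᗮ) :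
    proj S x = 0 := by
  rw [proj_apply, Submodule.orthogonalProjectionOnto_apply_of_mem_orthogonal hx,
    Submodule.coe_zero]

/-- If `T ≤ S` then `P_{S ⊓ Tᗮ} = P_S - P_T`. -/
lemma proj_inf_orthogonal (S T : Submodule 𝕜 H) [CompleteSpace S] [CompleteSpace T]
    [CompleteSpace (S ⊓ Tᗮ : Submodule 𝕜 H)] (hTS : T ≤ S) :
    proj (S ⊓ Tᗮ) = proj S - proj T := by
  ext x
  simp only [ContinuousLinearMap.sub_apply, proj_apply]
  apply Submodule.eq_starProjection_of_mem_of_inner_eq_zero (K := S ⊓ Tᗮ)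
  · constructor
    · exact Submodule.sub_mem _ (proj_mem S x) (hTS (proj_mem T x))
    · have h := Submodule.sub_starProjection_mem_orthogonal (K := T)
        (S.starProjection x)
      rwa [Submodule.starProjection_apply T,
        Submodule.orthogonalProjectionOnto_starProjection_of_le hTS] at h
  · rintro w ⟨hwS, hwT⟩
    have h1 : ⟪x - (S.orthogonalProjectionOnto x : H), w⟫_𝕜 = 0 :=
      Submodule.starProjection_inner_eq_zero (K := S) x w hwS
    have h2 : ⟪(T.orthogonalProjectionOnto x : H), w⟫_𝕜 = 0 :=
      hwT _ (proj_mem T x)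
    have : x - ((S.orthogonalProjectionOnto x : H) - (T.orthogonalProjectionOnto x : H))
        = (x - (S.orthogonalProjectionOnto x : H)) + (T.orthogonalProjectionOnto x : H) := by abel
    rw [this, inner_add_left, h1, h2, add_zero]

lemma proj_comp_proj_eq_zero (S T : Submodule 𝕜 H) [CompleteSpace S] [CompleteSpace T]
    (h : T ≤ Sᗮ) : (proj S).comp (proj T) = 0 := by
  ext x
  simp only [ContinuousLinearMap.comp_apply, ContinuousLinearMap.zero_apply]
  exact proj_eq_zero S (h (proj_mem T x))

/-- Algebraic lemma: if `p` is idempotent and annihilates `q` on both sides, then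
`(p + q) ^ k = p + q ^ k` for `k ≥ 1`. -/
lemma idem_add_pow {R : Type*} [Ring R] (p q : R) (hp : p * p = p)
    (hpq : p * q = 0) (hqp : q * p = 0) : ∀ k : ℕ, 1 ≤ k → (p + q) ^ k = p + q ^ k := by
  have key : ∀ n : ℕ, (p + q) ^ (n + 1) = p + q ^ (n + 1) := by
    intro n
    induction n with
    | zero => simp
    | succ m ih =>
      have hqp' : q ^ (m + 1) * p = 0 := by
        rw [pow_succ, mul_assoc, hqp, mul_zero]
      rw [pow_succ, ih, add_mul, mul_add, mul_add, hp, hpq, add_zero, hqp', zero_add,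
        ← pow_succ]
  intro k hk
  obtain ⟨n, rfl⟩ : ∃ n, k = n + 1 := ⟨k - 1, by omega⟩
  exact key n

end aux

/-- `(P_{M₂}P_{M₁})^k − P_M = (P_B P_A)^k` where `A = M₁ ∩ M^⊥`, `B = M₂ ∩ M^⊥`,
`M = M₁ ∩ M₂`. -/
theorem alternating_pow_sub_proj {𝕜 H : Type*} [RCLike 𝕜] [NormedAddCommGroup H]
    [InnerProductSpace 𝕜 H] [CompleteSpace H] (M₁ M₂ : Submodule 𝕜 H)
    [CompleteSpace M₁] [CompleteSpace M₂] [CompleteSpace (M₁ ⊓ M₂ : Submodule 𝕜 H)]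
    [CompleteSpace (M₁ ⊓ (M₁ ⊓ M₂)ᗮ : Submodule 𝕜 H)]
    [CompleteSpace (M₂ ⊓ (M₁ ⊓ M₂)ᗮ : Submodule 𝕜 H)]
    (k : ℕ) (hk : 1 ≤ k) :
    ((proj M₂).comp (proj M₁)) ^ k - proj (M₁ ⊓ M₂)
      = ((proj (M₂ ⊓ (M₁ ⊓ M₂)ᗮ)).comp (proj (M₁ ⊓ (M₁ ⊓ M₂)ᗮ))) ^ k := by
  set M : Submodule 𝕜 H := M₁ ⊓ M₂ with hM
  set A : Submodule 𝕜 H := M₁ ⊓ Mᗮ with hA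
  set B : Submodule 𝕜 H := M₂ ⊓ Mᗮ with hB
  have hAle : A ≤ Mᗮ := inf_le_right
  have hBle : B ≤ Mᗮ := inf_le_right
  have hMA : M ≤ Aᗮ := fun m hm a ha => inner_eq_zero_symm.mp ((hAle ha) m hm)
  have hMB : M ≤ Bᗮ := fun m hm b hb => inner_eq_zero_symm.mp ((hBle hb) m hm)
  have h1 : proj A = proj M₁ - proj M := proj_inf_orthogonal M₁ M inf_le_left
  have h2 : proj B = proj M₂ - proj M := proj_inf_orthogonal M₂ M inf_le_right
  -- zero compositions
  have hPA : (proj M).comp (proj A) = 0 := proj_comp_proj_eq_zero M A hAle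
  have hAP : (proj A).comp (proj M) = 0 := proj_comp_proj_eq_zero A M hMA
  have hPB : (proj M).comp (proj B) = 0 := proj_comp_proj_eq_zero M B hBle
  have hBP : (proj B).comp (proj M) = 0 := proj_comp_proj_eq_zero B M hMB
  have hPP : (proj M).comp (proj M) = proj M := by
    ext x
    exact proj_eq_self M (proj_mem M x)
  -- key : P₂ ∘ P₁ = P + P_B ∘ P_A
  have hkey : (proj M₂).comp (proj M₁) = proj M + (proj B).comp (proj A) := by
    have e1 : proj M₁ = proj M + proj A := by rw [h1]; abel
    have e2 : proj M₂ = proj M + proj B := by rw [h2]; abel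
    calc (proj M₂).comp (proj M₁)
        = proj M₂ * proj M₁ := rfl
      _ = (proj M + proj B) * (proj M + proj A) := by rw [e1, e2]
      _ = proj M * proj M + proj M * proj A + proj B * proj M + proj B * proj A := by
          noncomm_ring
      _ = proj M + (proj B).comp (proj A) := by
          show (proj M).comp (proj M) + (proj M).comp (proj A) + (proj B).comp (proj M)
            + (proj B).comp (proj A) = _
          rw [hPP, hPA, hBP]; abel
  have hPQ : proj M * ((proj B).comp (proj A)) = 0 := by
    show (proj M).comp ((proj B).comp (proj A)) = 0
    rw [← ContinuousLinearMap.comp_assoc, hPB, ContinuousLinearMap.zero_comp]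
  have hQP : ((proj B).comp (proj A)) * proj M = 0 := by
    show ((proj B).comp (proj A)).comp (proj M) = 0
    rw [ContinuousLinearMap.comp_assoc, hAP, ContinuousLinearMap.comp_zero]
  rw [hkey, idem_add_pow (proj M) ((proj B).comp (proj A)) hPP hPQ hQP k hk]
  show proj M + _ - proj M = _
  abel
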